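/- With φ(0) = I₂ and φ(k) = diag(0,1) for k ≥ 1, the (i,j) entry of the inverse of the semi-infinite block Toeplitz matrix B_{nn}(i,j) = B(i−j) (with B(0)=diag(1,2), B(±1)=diag(0,−1), B(k)=0 for |k|≥2) is B_{nn}^{−1}(i,j) = Σ_{l=0}^{min(i,j)} φ(i−l)* φ(j−l) = diag(δ_{ij}, min(i,j)+1) for i,j ≥ 0. In particular B_{nn}^{−1}(0,0) = I₂. -/

import Mathlib

open Matrix

private lemma diag_sum' (s : Finset ℕ) (v : ℕ → Fin 2 → ℂ) :
    ∑ l ∈ s, Matrix.diagonal (v l) = Matrix.diagonal (fun a => ∑ l ∈ s, v l a) := by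
  ext a b
  simp [Matrix.sum_apply, Matrix.diagonal_apply]

private lemma diag01_ct' : (Matrix.diagonal ![0,1] : Matrix (Fin 2) (Fin 2) ℂ)ᴴ = Matrix.diagonal ![0,1] := by
  simp [Matrix.diagonal_conjTranspose]

private lemma diag_eq_one_of (f : Fin 2 → ℂ) (h0 : f 0 = 1) (h1 : f 1 = 1) :
    Matrix.diagonal f = 1 := by
  ext a b
  fin_cases a <;> fin_cases b <;>
    simp [Matrix.diagonal_apply, Matrix.one_apply, h0, h1]

private lemma diag_eq_zero_of (f : Fin 2 → ℂ) (h0 : f 0 = 0) (h1 : f 1 = 0) :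
    Matrix.diagonal f = 0 := by
  ext a b
  fin_cases a <;> fin_cases b <;>
    simp [Matrix.diagonal_apply, h0, h1]

private lemma smul_diag01 (n : ℕ) :
    (n • Matrix.diagonal ![0,1] : Matrix (Fin 2) (Fin 2) ℂ) = Matrix.diagonal ![0, (n:ℂ)] := by
  ext a b
  rw [Matrix.smul_apply]
  fin_cases a <;> fin_cases b <;> simp [Matrix.diagonal_apply]

private lemma key_scalar (i j : ℕ) :
    ∑ l ∈ Finset.range (max i j + 2),
      (if ((i:ℤ) - l) = 0 then (2:ℂ) else if ((i:ℤ) - l) = 1 ∨ ((i:ℤ) - l) = -1 then -1 else 0)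
        * (((min l j : ℕ) : ℂ) + 1) = if i = j then 1 else 0 := by
  set f : ℕ → ℂ := fun l =>
      (if ((i:ℤ) - l) = 0 then (2:ℂ) else if ((i:ℤ) - l) = 1 ∨ ((i:ℤ) - l) = -1 then -1 else 0)
        * (((min l j : ℕ) : ℂ) + 1) with hf
  have h1 : ∑ l ∈ Finset.range (max i j + 2), f l = ∑ l ∈ Finset.range (i + 2), f l := by
    rw [← Finset.sum_subset (Finset.range_subset_range.2 (by omega : i + 2 ≤ max i j + 2))]
    intro l _ hl
    simp only [Finset.mem_range] at hl
    simp only [hf]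
    rw [if_neg (by omega), if_neg (by omega), zero_mul]
  rw [h1, Finset.sum_range_succ, Finset.sum_range_succ]
  have hfi : f i = 2 * (((min i j : ℕ) : ℂ) + 1) := by
    simp only [hf]; rw [if_pos (by omega)]
  have hfi1 : f (i+1) = -((((min (i+1) j : ℕ) : ℂ)) + 1) := by
    simp only [hf]; rw [if_neg (by omega), if_pos (by omega)]; ring
  have hrest : ∑ l ∈ Finset.range i, f l =
      if i = 0 then 0 else -((((min (i-1) j : ℕ) : ℂ)) + 1) := by
    rcases Nat.eq_zero_or_pos i with h0 | h0
    · simp [h0]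
    · obtain ⟨m, rfl⟩ : ∃ m, i = m + 1 := ⟨i - 1, by omega⟩
      rw [Finset.sum_range_succ]
      have hz2 : ∑ l ∈ Finset.range m, f l = 0 := by
        apply Finset.sum_eq_zero
        intro l hl
        simp only [Finset.mem_range] at hl
        simp only [hf]
        rw [if_neg (by omega), if_neg (by omega), zero_mul]
      rw [hz2, if_neg (by omega), zero_add]
      simp only [hf, Nat.add_sub_cancel]
      rw [if_neg (by omega), if_pos (by omega)]
      ring
  rw [hfi, hfi1, hrest]
  by_cases h0 : i = 0
  · subst h0
    by_cases hj : j = 0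
    · subst hj; norm_num
    · rw [if_pos rfl, min_eq_left (Nat.zero_le j), min_eq_left (by omega : 1 ≤ j),
        if_neg (by omega : ¬ (0 = j))]
      norm_num
  · rw [if_neg h0]
    rcases lt_trichotomy i j with h | h | h
    · rw [min_eq_left (by omega : i - 1 ≤ j), min_eq_left (le_of_lt h),
        min_eq_left (by omega : i + 1 ≤ j), if_neg (by omega : ¬ i = j),
        Nat.cast_sub (by omega : 1 ≤ i)]
      push_cast; ring
    · subst h
      rw [min_self, min_eq_left (by omega : i - 1 ≤ i),
        min_eq_right (by omega : i ≤ i + 1), if_pos rfl,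
        Nat.cast_sub (by omega : 1 ≤ i)]
      push_cast; ring
    · rw [min_eq_right (by omega : j ≤ i - 1), min_eq_right (by omega : j ≤ i),
        min_eq_right (by omega : j ≤ i + 1), if_neg (by omega : ¬ i = j)]
      ring

private lemma key_scalar' (i j : ℕ) :
    ∑ l ∈ Finset.range (max i j + 2),
      (((min i l : ℕ) : ℂ) + 1) *
      (if ((l:ℤ) - j) = 0 then (2:ℂ) else if ((l:ℤ) - j) = 1 ∨ ((l:ℤ) - j) = -1 then -1 else 0)
      = if i = j then 1 else 0 := by
  have h := key_scalar j i
  rw [max_comm j i] at h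
  have hiff : (if i = j then (1:ℂ) else 0) = (if j = i then (1:ℂ) else 0) := by
    by_cases hij : i = j
    · rw [if_pos hij, if_pos hij.symm]
    · rw [if_neg hij, if_neg (fun hh => hij hh.symm)]
  rw [hiff, ← h]
  apply Finset.sum_congr rfl
  intro l _
  rw [min_comm, mul_comm]
  congr 1
  simp only [show ((l:ℤ) - j = 0) ↔ ((j:ℤ) - l = 0) from by omega,
    show ((l:ℤ) - j = 1 ∨ (l:ℤ) - j = -1) ↔ ((j:ℤ) - l = 1 ∨ (j:ℤ) - l = -1) from by omega]

private lemma key_delta (i j : ℕ) :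
    ∑ l ∈ Finset.range (max i j + 2),
      (if ((i:ℤ) - l) = 0 then (1:ℂ) else 0) * (if l = j then (1:ℂ) else 0)
      = if i = j then 1 else 0 := by
  rw [Finset.sum_eq_single j]
  · rw [if_pos rfl, mul_one]
    split_ifs with h1 h2 h2 <;> first | rfl | omega
  · intro l _ hl; rw [if_neg hl, mul_zero]
  · intro h; exact absurd (Finset.mem_range.2 (by omega)) h

private lemma key_delta' (i j : ℕ) :
    ∑ l ∈ Finset.range (max i j + 2),
      (if i = l then (1:ℂ) else 0) * (if ((l:ℤ) - j) = 0 then (1:ℂ) else 0)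
      = if i = j then 1 else 0 := by
  rw [Finset.sum_eq_single i]
  · rw [if_pos rfl, one_mul]
    split_ifs with h1 h2 h2 <;> first | rfl | omega
  · intro l _ hl; rw [if_neg (Ne.symm hl), zero_mul]
  · intro h; exact absurd (Finset.mem_range.2 (by omega)) h

/-- The inverse of the semi-infinite block Toeplitz matrix `B_{nn}(i,j) = B(i−j)`
(with `B(0) = diag(1,2)`, `B(±1) = diag(0,−1)`, `B(k) = 0` for `|k| ≥ 2`) has entries
`B_{nn}⁻¹(i,j) = Σ_{l=0}^{min(i,j)} φ(i−l)* φ(j−l) = diag(δ_{ij}, min(i,j)+1)`, i.e. the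
operator `G` with these entries satisfies `B_{nn}G = GB_{nn} = I` (the products are
finite-band block sums).  In particular `B_{nn}⁻¹(0,0) = I₂`. -/
theorem toeplitz_inverse_entries
    (φ : ℕ → Matrix (Fin 2) (Fin 2) ℂ)
    (hφ0 : φ 0 = 1) (hφ : ∀ k, 1 ≤ k → φ k = Matrix.diagonal ![0, 1])
    (B : ℤ → Matrix (Fin 2) (Fin 2) ℂ)
    (hB0 : B 0 = Matrix.diagonal ![1, 2])
    (hB1 : B 1 = Matrix.diagonal ![0, -1])
    (hBm1 : B (-1) = Matrix.diagonal ![0, -1])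
    (hBk : ∀ k : ℤ, 2 ≤ |k| → B k = 0)
    (G : ℕ → ℕ → Matrix (Fin 2) (Fin 2) ℂ)
    (hG : ∀ i j : ℕ, G i j = ∑ l ∈ Finset.range (min i j + 1), (φ (i - l))ᴴ * φ (j - l)) :
    (∀ i j : ℕ, G i j = Matrix.diagonal ![if i = j then 1 else 0, ((min i j : ℕ) : ℂ) + 1]) ∧
    (∀ i j : ℕ,
      ∑ l ∈ Finset.range (max i j + 2), B ((i : ℤ) - l) * G l j = if i = j then 1 else 0) ∧
    (∀ i j : ℕ,
      ∑ l ∈ Finset.range (max i j + 2), G i l * B ((l : ℤ) - j) = if i = j then 1 else 0) ∧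
    G 0 0 = 1 := by
  -- closed form for B
  have hb : ∀ k : ℤ, B k = Matrix.diagonal ![if k = 0 then (1:ℂ) else 0,
      if k = 0 then 2 else if k = 1 ∨ k = -1 then -1 else 0] := by
    intro k
    by_cases h0 : k = 0
    · subst h0; rw [hB0]; norm_num
    by_cases h1 : k = 1
    · subst h1; rw [hB1]; norm_num
    by_cases hm : k = -1
    · subst hm; rw [hBm1]; norm_num
    · have habs : 2 ≤ |k| := by
        rcases le_or_gt 0 k with hk | hk
        · rw [abs_of_nonneg hk]; omega
        · rw [abs_of_neg hk]; omega
      rw [hBk k habs, if_neg h0, if_neg h0, if_neg (not_or.mpr ⟨h1, hm⟩)]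
      ext a b
      fin_cases a <;> fin_cases b <;> simp [Matrix.diagonal_apply]
  -- closed form for G
  have hG' : ∀ i j : ℕ, G i j =
      Matrix.diagonal ![if i = j then 1 else 0, ((min i j : ℕ) : ℂ) + 1] := by
    intro i j
    rcases lt_trichotomy i j with h | h | h
    · rw [hG, min_eq_left h.le, Finset.sum_range_succ]
      have hbulk : ∀ l ∈ Finset.range i,
          (φ (i - l))ᴴ * φ (j - l) = Matrix.diagonal ![0, 1] := by
        intro l hl
        simp only [Finset.mem_range] at hl
        rw [hφ (i - l) (by omega), hφ (j - l) (by omega), diag01_ct',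
          Matrix.diagonal_mul_diagonal]
        ext a b
        fin_cases a <;> fin_cases b <;> simp [Matrix.diagonal_apply]
      rw [Finset.sum_congr rfl hbulk, Finset.sum_const, Finset.card_range,
        Nat.sub_self, hφ0, hφ (j - i) (by omega), Matrix.conjTranspose_one, one_mul,
        smul_diag01]
      ext a b
      fin_cases a <;> fin_cases b <;>
        simp [Matrix.diagonal_apply, show ¬ i = j from by omega]
    · subst h
      rw [hG, min_self, Finset.sum_range_succ]
      have hbulk : ∀ l ∈ Finset.range i,
          (φ (i - l))ᴴ * φ (i - l) = Matrix.diagonal ![0, 1] := by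
        intro l hl
        simp only [Finset.mem_range] at hl
        rw [hφ (i - l) (by omega), diag01_ct', Matrix.diagonal_mul_diagonal]
        ext a b
        fin_cases a <;> fin_cases b <;> simp [Matrix.diagonal_apply]
      rw [Finset.sum_congr rfl hbulk, Finset.sum_const, Finset.card_range,
        Nat.sub_self, hφ0, Matrix.conjTranspose_one, one_mul, smul_diag01]
      ext a b
      fin_cases a <;> fin_cases b <;>
        simp [Matrix.diagonal_apply, Matrix.one_apply]
    · rw [hG, min_eq_right h.le, Finset.sum_range_succ]
      have hbulk : ∀ l ∈ Finset.range j,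
          (φ (i - l))ᴴ * φ (j - l) = Matrix.diagonal ![0, 1] := by
        intro l hl
        simp only [Finset.mem_range] at hl
        rw [hφ (i - l) (by omega), hφ (j - l) (by omega), diag01_ct',
          Matrix.diagonal_mul_diagonal]
        ext a b
        fin_cases a <;> fin_cases b <;> simp [Matrix.diagonal_apply]
      rw [Finset.sum_congr rfl hbulk, Finset.sum_const, Finset.card_range,
        Nat.sub_self, hφ0, hφ (i - j) (by omega), diag01_ct', mul_one, smul_diag01]
      ext a b
      fin_cases a <;> fin_cases b <;>
        simp [Matrix.diagonal_apply, show ¬ i = j from by omega]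
  refine ⟨hG', ?_, ?_, ?_⟩
  · -- B * G = 1
    intro i j
    have e : ∀ l ∈ Finset.range (max i j + 2), B ((i : ℤ) - l) * G l j =
        Matrix.diagonal (fun a : Fin 2 =>
          if a = 0 then
            (if ((i:ℤ) - l) = 0 then (1:ℂ) else 0) * (if l = j then (1:ℂ) else 0)
          else
            (if ((i:ℤ) - l) = 0 then (2:ℂ) else
              if ((i:ℤ) - l) = 1 ∨ ((i:ℤ) - l) = -1 then -1 else 0)
              * (((min l j : ℕ) : ℂ) + 1)) := by
      intro l _
      rw [hb, hG' l j, Matrix.diagonal_mul_diagonal]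
      ext a b
      fin_cases a <;> fin_cases b <;> simp [Matrix.diagonal_apply]
    rw [Finset.sum_congr rfl e, diag_sum']
    by_cases hij : i = j
    · rw [if_pos hij]
      apply diag_eq_one_of
      · simpa [hij] using key_delta i j
      · simpa [hij] using key_scalar i j
    · rw [if_neg hij]
      apply diag_eq_zero_of
      · simpa [hij] using key_delta i j
      · simpa [hij] using key_scalar i j
  · -- G * B = 1
    intro i j
    have e : ∀ l ∈ Finset.range (max i j + 2), G i l * B ((l : ℤ) - j) =
        Matrix.diagonal (fun a : Fin 2 =>
          if a = 0 then
            (if i = l then (1:ℂ) else 0) * (if ((l:ℤ) - j) = 0 then (1:ℂ) else 0)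
          else
            (((min i l : ℕ) : ℂ) + 1) *
            (if ((l:ℤ) - j) = 0 then (2:ℂ) else
              if ((l:ℤ) - j) = 1 ∨ ((l:ℤ) - j) = -1 then -1 else 0)) := by
      intro l _
      rw [hb, hG' i l, Matrix.diagonal_mul_diagonal]
      ext a b
      fin_cases a <;> fin_cases b <;> simp [Matrix.diagonal_apply]
    rw [Finset.sum_congr rfl e, diag_sum']
    by_cases hij : i = j
    · rw [if_pos hij]
      apply diag_eq_one_of
      · simpa [hij] using key_delta' i j
      · simpa [hij] using key_scalar' i j
    · rw [if_neg hij]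
      apply diag_eq_zero_of
      · simpa [hij] using key_delta' i j
      · simpa [hij] using key_scalar' i j
  · rw [hG' 0 0]
    apply diag_eq_one_of <;> norm_num
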